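/- arXiv:2001.10476 — 2 statements merged into one kernel-verified Lean document; each statement's English description precedes it below -/
import Mathlib

section
/- Let α ≥ 0, 2 + α + √(α² + (7/2)α + 3) ≤ p < 2(2+α), and s ∈ [0,1]. Then B((2+α)/p, 1−(2+α)/p) · H_{α,p}(s) ≤ ∫₀¹ ψ_{α,p}(t) K_{α,p}(s,t) dt. -/
open MeasureTheory intervalIntegral

/-- The Beta function `B(x,y) = ∫₀¹ t^(x-1) (1-t)^(y-1) dt`. -/
noncomputable def betaFn (x y : ℝ) : ℝ :=
  ∫ t in (0:ℝ)..1, t ^ (x - 1) * (1 - t) ^ (y - 1)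

/-- The incomplete Beta function `B_T(x,y) = ∫₀^T s^(x-1) (1-s)^(y-1) ds`. -/
noncomputable def betaInc (T x y : ℝ) : ℝ :=
  ∫ s in (0:ℝ)..T, s ^ (x - 1) * (1 - s) ^ (y - 1)

/-- The regularized incomplete Beta function `I_T(x,y) = B_T(x,y)/B(x,y)`. -/
noncomputable def betaReg (T x y : ℝ) : ℝ := betaInc T x y / betaFn x y

/-- Generalized binomial coefficient `binom(α,k) = α(α-1)⋯(α-k+1)/k!`. -/
noncomputable def gBinom (α : ℝ) (k : ℕ) : ℝ :=
  (∏ i ∈ Finset.range k, (α - i)) / (Nat.factorial k)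

/-- `ψ_{α,p}(t) = t^((2+α)/p - 1) (1-t)^(-(2+α)/p)`. -/
noncomputable def psiFn (α p t : ℝ) : ℝ :=
  t ^ ((2 + α) / p - 1) * (1 - t) ^ (-((2 + α) / p))

/-- `H_{α,p}(s) = Σ_k binom(α,k)(-1)^k/(p-2α-2+2k) - (1/(2(α+1)))(1-s⁴)^(α+1)`. -/
noncomputable def Hfun (α p s : ℝ) : ℝ :=
  (∑' k : ℕ, gBinom α k * (-1) ^ k / (p - 2 * α - 2 + 2 * k)) -
    1 / (2 * (α + 1)) * (1 - s ^ 4) ^ (α + 1)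

/-- `K_{α,p}(s,t) = Σ_k binom(α,k)(-1)^k max{s²,t²}^(p-2α-2+2k)/(p-2α-2+2k)`. -/
noncomputable def Kfun (α p s t : ℝ) : ℝ :=
  ∑' k : ℕ, gBinom α k * (-1) ^ k * (max (s ^ 2) (t ^ 2)) ^ (p - 2 * α - 2 + 2 * (k : ℝ)) /
    (p - 2 * α - 2 + 2 * k)

/-- Condition (C): `∫₀¹ I_t((2+α)/p, 1-(2+α)/p) t^(2p-4α-5)(1-t⁴)^α dt - 1/(4(α+1)) ≤ 0`. -/
noncomputable def condC (α p : ℝ) : Prop :=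
  (∫ t in (0:ℝ)..1,
      betaReg t ((2 + α) / p) (1 - (2 + α) / p) * t ^ (2 * p - 4 * α - 5) * (1 - t ^ 4) ^ α)
    - 1 / (4 * (α + 1)) ≤ 0

/-- Lebesgue area measure on `ℂ` normalized so that the unit disk has measure 1. -/
noncomputable def normalizedArea : Measure ℂ := (ENNReal.ofReal Real.pi)⁻¹ • volume

/-- The (p-th power of the) weighted Bergman norm:
`‖f‖_{A^p_α} = ((α+1) ∫_𝔻 |f(w)|^p (1-|w|²)^α dA(w))^(1/p)`. -/
noncomputable def bergmanNorm (α p : ℝ) (f : ℂ → ℂ) : ℝ :=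
  ((α + 1) * ∫ w in Metric.ball (0 : ℂ) 1,
      ‖f w‖ ^ p * (1 - ‖w‖ ^ 2) ^ α ∂normalizedArea) ^ (1 / p)

/-- Membership in the weighted Bergman space `A^p_α`: `f` is analytic on the unit disk and has
finite Bergman norm (the defining integrand is integrable). -/
def MemBergman (α p : ℝ) (f : ℂ → ℂ) : Prop :=
  DifferentiableOn ℂ f (Metric.ball (0 : ℂ) 1) ∧
  IntegrableOn (fun w => ‖f w‖ ^ p * (1 - ‖w‖ ^ 2) ^ α)
    (Metric.ball (0 : ℂ) 1) normalizedArea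

/-- The Hilbert matrix operator `ℋ(f)(z) = ∫₀¹ f(t/((t-1)z+1)) / ((t-1)z+1) dt`. -/
noncomputable def hilbertOp (f : ℂ → ℂ) (z : ℂ) : ℂ :=
  ∫ t in (0:ℝ)..1, f ((t : ℂ) / (((t : ℂ) - 1) * z + 1)) / (((t : ℂ) - 1) * z + 1)

/-- The operator norm of the Hilbert matrix operator on `A^p_α`:
`sup { ‖ℋ f‖_{A^p_α} : f ∈ A^p_α, ‖f‖_{A^p_α} ≤ 1 }`. -/
noncomputable def hilbertOpNorm (α p : ℝ) : ℝ :=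
  sSup {c : ℝ | ∃ f : ℂ → ℂ, MemBergman α p f ∧ bergmanNorm α p f ≤ 1 ∧
    c = bergmanNorm α p (hilbertOp f)}

lemma gBinom_zero (α : ℝ) : gBinom α 0 = 1 := by simp [gBinom]

lemma gBinom_succ (α : ℝ) (k : ℕ) :
    gBinom α (k + 1) = (α - k) / (k + 1) * gBinom α k := by
  have h : ((k + 1 : ℕ) : ℝ) ≠ 0 := by positivity
  simp only [gBinom, Finset.prod_range_succ, Nat.factorial_succ]
  push_cast
  field_simp

lemma gBinom_bound_aux (α : ℝ) (hα : 0 ≤ α) (k : ℕ) :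
    |gBinom α k| * (k + 1) ≤ (2 + 2 * α) ^ (min k ⌈α⌉₊) := by
  induction k with
  | zero => simp [gBinom_zero]
  | succ k ih =>
    have hg : 0 ≤ |gBinom α k| := abs_nonneg _
    have hk1 : (0:ℝ) < (k:ℝ) + 1 := by positivity
    rw [gBinom_succ, abs_mul, abs_div, abs_of_pos hk1]
    push_cast
    rcases le_or_gt ⌈α⌉₊ k with hk | hk
    · have hαk : α ≤ k := le_trans (Nat.le_ceil α) (by exact_mod_cast hk)
      have h1 : |α - (k:ℝ)| = k - α := by rw [abs_sub_comm, abs_of_nonneg (by linarith)]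
      have hmin : min (k+1) ⌈α⌉₊ = min k ⌈α⌉₊ := by omega
      rw [hmin, h1]
      have key : ((k:ℝ) - α) * ((k:ℝ) + 1 + 1) ≤ ((k:ℝ) + 1) * ((k:ℝ) + 1) := by
        nlinarith [mul_nonneg hα (Nat.cast_nonneg k : (0:ℝ) ≤ k)]
      calc ((k:ℝ) - α) / (k + 1) * |gBinom α k| * ((k:ℝ) + 1 + 1)
          ≤ |gBinom α k| * ((k:ℝ) + 1) := by
            rw [div_mul_eq_mul_div, div_mul_eq_mul_div, div_le_iff₀ hk1]
            nlinarith [mul_le_mul_of_nonneg_left key hg]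
        _ ≤ _ := ih
    · have hmin1 : min (k+1) ⌈α⌉₊ = k + 1 := by omega
      have hmin2 : min k ⌈α⌉₊ = k := by omega
      rw [hmin2] at ih
      rw [hmin1]
      have h1 : |α - (k:ℝ)| ≤ α + k := by
        have := abs_sub_abs_le_abs_sub α (k:ℝ)
        have h0 : (0:ℝ) ≤ (k:ℝ) := Nat.cast_nonneg k
        rw [abs_le]; constructor <;> cases abs_cases (α - (k:ℝ)) <;> nlinarith
      have key : |α - (k:ℝ)| * ((k:ℝ) + 1 + 1) ≤ (2 + 2*α) * (((k:ℝ) + 1) * ((k:ℝ) + 1)) := by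
        have h0 : (0:ℝ) ≤ (k:ℝ) := Nat.cast_nonneg k
        nlinarith [mul_nonneg hα h0, mul_nonneg (mul_nonneg hα h0) h0]
      have h2 : (2 + 2*α) ^ (k+1) = (2 + 2*α) * (2 + 2*α) ^ k := by ring
      rw [h2]
      calc |α - (k:ℝ)| / (k + 1) * |gBinom α k| * ((k:ℝ) + 1 + 1)
          ≤ (2 + 2*α) * (|gBinom α k| * ((k:ℝ) + 1)) := by
            rw [div_mul_eq_mul_div, div_mul_eq_mul_div, div_le_iff₀ hk1]
            nlinarith [mul_le_mul_of_nonneg_left key hg]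
        _ ≤ (2 + 2*α) * (2 + 2*α) ^ k := by
            have h3 : (0:ℝ) ≤ 2 + 2*α := by linarith
            exact mul_le_mul_of_nonneg_left ih h3

lemma gBinom_abs_le (α : ℝ) (hα : 0 ≤ α) (k : ℕ) :
    |gBinom α k| * (k + 1) ≤ (2 + 2 * α) ^ ⌈α⌉₊ := by
  refine (gBinom_bound_aux α hα k).trans ?_
  exact pow_le_pow_right₀ (by linarith) (min_le_right _ _)

lemma gBinom_abs_le' (α : ℝ) (hα : 0 ≤ α) (k : ℕ) :
    |gBinom α k| ≤ (2 + 2 * α) ^ ⌈α⌉₊ := by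
  have h := gBinom_abs_le α hα k
  have h0 : (0:ℝ) ≤ (k:ℝ) := Nat.cast_nonneg k
  nlinarith [abs_nonneg (gBinom α k)]

lemma gBinom_summable (α : ℝ) (hα : 0 ≤ α) {y : ℝ} (hy : |y| < 1) :
    Summable (fun k => gBinom α k * y ^ k) := by
  refine Summable.of_norm_bounded (g := fun k => (2 + 2*α) ^ ⌈α⌉₊ * |y| ^ k)
    ((summable_geometric_of_lt_one (abs_nonneg y) hy).mul_left _) (fun k => ?_)
  rw [Real.norm_eq_abs, abs_mul, abs_pow]
  exact mul_le_mul_of_nonneg_right (gBinom_abs_le' α hα k) (by positivity)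

lemma gBinom_summable_kmul (α : ℝ) (hα : 0 ≤ α) {y : ℝ} (hy : |y| < 1) :
    Summable (fun k : ℕ => (k:ℝ) * gBinom α k * y ^ k) := by
  have hs : Summable (fun k : ℕ => (2 + 2*α) ^ ⌈α⌉₊ * ((k:ℝ) ^ 1 * |y| ^ k)) :=
    (summable_pow_mul_geometric_of_norm_lt_one (R := ℝ) (r := |y|) 1 (by rw [Real.norm_eq_abs, abs_abs]; exact hy)).mul_left _
  refine Summable.of_norm_bounded hs (fun k => ?_)
  rw [Real.norm_eq_abs, abs_mul, abs_mul, abs_pow, pow_one]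
  have h2 : |(k:ℝ)| = (k:ℝ) := abs_of_nonneg (Nat.cast_nonneg k)
  rw [h2]
  have := gBinom_abs_le' α hα k
  have h0 : (0:ℝ) ≤ (k:ℝ) := Nat.cast_nonneg k
  calc (k:ℝ) * |gBinom α k| * |y| ^ k
      ≤ (k:ℝ) * (2 + 2*α) ^ ⌈α⌉₊ * |y| ^ k := by
        refine mul_le_mul_of_nonneg_right (mul_le_mul_of_nonneg_left this h0) (by positivity)
    _ = (2 + 2*α) ^ ⌈α⌉₊ * ((k:ℝ) * |y| ^ k) := by ring

lemma gBinom_summable_deriv (α : ℝ) (hα : 0 ≤ α) {y : ℝ} (hy : |y| < 1) :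
    Summable (fun k => gBinom α k * ((k:ℝ) * y ^ (k - 1))) := by
  have hv : Summable (fun k : ℕ => (2 + 2*α) ^ ⌈α⌉₊ * (((k:ℝ) + 1) * |y| ^ k)) := by
    have h1 : Summable (fun k : ℕ => (k:ℝ) ^ 1 * |y| ^ k) :=
      summable_pow_mul_geometric_of_norm_lt_one 1 (by rw [Real.norm_eq_abs, abs_abs]; exact hy)
    have h2 : Summable (fun k : ℕ => |y| ^ k) :=
      summable_geometric_of_lt_one (abs_nonneg y) hy
    simpa [pow_one, add_mul, one_mul, mul_add, mul_assoc] using ((h1.add h2).mul_left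
      ((2 + 2*α) ^ ⌈α⌉₊))
  have hu : Summable (fun k : ℕ => (2 + 2*α) ^ ⌈α⌉₊ * ((k:ℝ) * |y| ^ (k - 1))) := by
    rw [← summable_nat_add_iff 1]
    refine hv.of_nonneg_of_le (fun k => by positivity) (fun k => ?_)
    refine mul_le_mul_of_nonneg_left ?_ (by positivity)
    simp only [Nat.add_sub_cancel]
    push_cast
    exact le_refl _
  refine Summable.of_norm_bounded hu (fun k => ?_)
  rw [Real.norm_eq_abs, abs_mul, abs_mul, abs_pow]
  have h2 : |(k:ℝ)| = (k:ℝ) := abs_of_nonneg (Nat.cast_nonneg k)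
  rw [h2]
  have h0 : (0:ℝ) ≤ (k:ℝ) := Nat.cast_nonneg k
  calc |gBinom α k| * ((k:ℝ) * |y| ^ (k - 1))
      ≤ (2 + 2*α) ^ ⌈α⌉₊ * ((k:ℝ) * |y| ^ (k - 1)) :=
        mul_le_mul_of_nonneg_right (gBinom_abs_le' α hα k) (by positivity)

/-- derivative of the binomial series -/
lemma gBinom_hasDerivAt (α : ℝ) (hα : 0 ≤ α) {y : ℝ} (hy : |y| < 1) :
    HasDerivAt (fun z => ∑' k, gBinom α k * z ^ k)
      (∑' k, gBinom α k * ((k:ℝ) * y ^ (k - 1))) y := by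
  set r : ℝ := (1 + |y|) / 2 with hr
  have hy0 : 0 ≤ |y| := abs_nonneg y
  have hr0 : 0 < r := by positivity
  have hyr : |y| < r := by rw [hr]; linarith
  have hr1 : r < 1 := by rw [hr]; linarith
  set D : ℝ := (2 + 2*α) ^ ⌈α⌉₊ with hD
  have hD0 : 0 < D := by positivity
  refine hasDerivAt_tsum_of_isPreconnected
    (u := fun k => D / r * r ^ k) (t := Set.Ioo (-r) r) (y₀ := 0)
    (((summable_geometric_of_lt_one hr0.le hr1).mul_left _)) isOpen_Ioo
    (convex_Ioo _ _).isPreconnected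
    (fun k z _ => (hasDerivAt_pow k z).const_mul (gBinom α k))
    (fun k z hz => ?_) (by rw [Set.mem_Ioo]; constructor <;> linarith)
    ?_ (by rw [Set.mem_Ioo, ← abs_lt]; exact hyr)
  · have hzr : |z| ≤ r := by
      rw [abs_le]; exact ⟨hz.1.le, hz.2.le⟩
    rw [Real.norm_eq_abs, abs_mul, abs_mul, abs_pow]
    have h1 : |gBinom α k| * ((k:ℝ) + 1) ≤ D := gBinom_abs_le α hα k
    have h2 : |(k:ℝ)| = (k:ℝ) := abs_of_nonneg (Nat.cast_nonneg k)
    rw [h2]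
    rcases Nat.eq_zero_or_pos k with rfl | hk
    · simp only [Nat.cast_zero, zero_mul, mul_zero, pow_zero, mul_one]; positivity
    · have h3 : |z| ^ (k - 1) ≤ r ^ (k - 1) := pow_le_pow_left₀ (abs_nonneg z) hzr _
      have h4 : r ^ (k - 1) = r ^ k / r := by
        rw [eq_div_iff hr0.ne', ← pow_succ]
        congr 1
        omega
      have h5 : (k:ℝ) ≤ (k:ℝ) + 1 := by linarith
      calc |gBinom α k| * ((k:ℝ) * |z| ^ (k - 1))
          ≤ |gBinom α k| * (((k:ℝ) + 1) * (r ^ k / r)) := by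
            refine mul_le_mul_of_nonneg_left ?_ (abs_nonneg _)
            refine mul_le_mul h5 (h3.trans_eq h4) (by positivity) (by positivity)
        _ = |gBinom α k| * ((k:ℝ) + 1) * (r ^ k / r) := by ring
        _ ≤ D * (r ^ k / r) := mul_le_mul_of_nonneg_right h1 (by positivity)
        _ = D / r * r ^ k := by ring
  · refine summable_of_ne_finset_zero (s := {0}) (fun k hk => ?_)
    simp only [Finset.mem_singleton] at hk
    rw [zero_pow hk, mul_zero]

lemma gBinom_ode (α : ℝ) (hα : 0 ≤ α) {z : ℝ} (hz : |z| < 1) :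
    (1 + z) * (∑' k, gBinom α k * ((k:ℝ) * z ^ (k - 1)))
      = α * ∑' k, gBinom α k * z ^ k := by
  have S0 : Summable (fun k => gBinom α k * z ^ k) := gBinom_summable α hα hz
  have S2 : Summable (fun k : ℕ => (k:ℝ) * gBinom α k * z ^ k) := gBinom_summable_kmul α hα hz
  have S1 : Summable (fun k => gBinom α k * ((k:ℝ) * z ^ (k - 1))) :=
    gBinom_summable_deriv α hα hz
  have hshift : (∑' k, gBinom α k * ((k:ℝ) * z ^ (k - 1)))
      = ∑' k, (α - k) * gBinom α k * z ^ k := by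
    rw [Summable.tsum_eq_zero_add S1]
    simp only [Nat.cast_zero, zero_mul, mul_zero, zero_add, Nat.add_sub_cancel]
    congr 1
    funext k
    rw [gBinom_succ]
    have hk1 : ((k:ℝ) + 1) ≠ 0 := by positivity
    push_cast
    field_simp
  have hsub : (∑' k, (α - k) * gBinom α k * z ^ k)
      = α * (∑' k, gBinom α k * z ^ k) - ∑' k : ℕ, (k:ℝ) * gBinom α k * z ^ k := by
    rw [← tsum_mul_left, ← Summable.tsum_sub (S0.mul_left α) S2]
    congr 1
    funext k
    ring
  have hzmul : z * (∑' k, gBinom α k * ((k:ℝ) * z ^ (k - 1)))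
      = ∑' k : ℕ, (k:ℝ) * gBinom α k * z ^ k := by
    rw [← tsum_mul_left]
    congr 1
    funext k
    rcases Nat.eq_zero_or_pos k with rfl | hk
    · simp
    · have : z ^ k = z * z ^ (k - 1) := by
        rw [← pow_succ']
        congr 1
        omega
      rw [this]
      ring
  calc (1 + z) * (∑' k, gBinom α k * ((k:ℝ) * z ^ (k - 1)))
      = (∑' k, gBinom α k * ((k:ℝ) * z ^ (k - 1)))
        + z * (∑' k, gBinom α k * ((k:ℝ) * z ^ (k - 1))) := by ring
    _ = (α * (∑' k, gBinom α k * z ^ k) - ∑' k : ℕ, (k:ℝ) * gBinom α k * z ^ k)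
        + ∑' k : ℕ, (k:ℝ) * gBinom α k * z ^ k := by rw [hzmul, hshift, hsub]
    _ = α * ∑' k, gBinom α k * z ^ k := by ring

lemma binomial_tsum (α : ℝ) (hα : 0 ≤ α) {y : ℝ} (hy : |y| < 1) :
    ∑' k, gBinom α k * y ^ k = (1 + y) ^ α := by
  set f : ℝ → ℝ := fun z => ∑' k, gBinom α k * z ^ k with hf
  set g : ℝ → ℝ := fun z => f z * (1 + z) ^ (-α) with hg
  have hf0 : f 0 = 1 := by
    show (∑' k : ℕ, gBinom α k * (0:ℝ) ^ k) = 1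
    rw [tsum_eq_single 0 (fun k hk => by rw [zero_pow hk, mul_zero])]
    simp [gBinom_zero]
  have hgd : ∀ z : ℝ, |z| < 1 → HasDerivAt g 0 z := by
    intro z hz
    have hz1 : 0 < 1 + z := by rw [abs_lt] at hz; linarith
    have h1 : HasDerivAt f (∑' k, gBinom α k * ((k:ℝ) * z ^ (k - 1))) z :=
      gBinom_hasDerivAt α hα hz
    have h2 : HasDerivAt (fun w : ℝ => (1 + w) ^ (-α))
        (-α * (1 + z) ^ (-α - 1)) z := by
      have h3 : HasDerivAt (fun w : ℝ => 1 + w) 1 z := (hasDerivAt_id z).const_add 1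
      have h4 := (Real.hasDerivAt_rpow_const (p := -α) (Or.inl hz1.ne')).comp z h3
      rw [mul_one] at h4
      exact h4
    have h5 := h1.mul h2
    have h6 : HasDerivAt g ((∑' k, gBinom α k * ((k:ℝ) * z ^ (k - 1))) * (1 + z) ^ (-α)
        + f z * (-α * (1 + z) ^ (-α - 1))) z := h5
    convert h6 using 1
    have hode := gBinom_ode α hα hz
    have hpow : (1 + z) ^ (-α - 1) * (1 + z) = (1 + z) ^ (-α) := by
      rw [← Real.rpow_add_one hz1.ne']
      ring_nf
    have : (∑' k, gBinom α k * ((k:ℝ) * z ^ (k - 1))) * (1 + z) ^ (-α)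
        + f z * (-α * (1 + z) ^ (-α - 1))
        = (1 + z) ^ (-α - 1) * ((1 + z) * (∑' k, gBinom α k * ((k:ℝ) * z ^ (k - 1))) - α * f z) := by
      rw [← hpow]
      ring
    rw [this, hode]
    simp [hf]
  -- g is constant on the segment between 0 and y
  have key : g y = g 0 := by
    rcases lt_trichotomy y 0 with hy0 | rfl | hy0
    · have hsub : Set.Icc y 0 ⊆ {z : ℝ | |z| < 1} := by
        intro z hz'
        rw [Set.mem_setOf_eq, abs_lt]
        rw [abs_lt] at hy
        exact ⟨by linarith [hz'.1], by linarith [hz'.2]⟩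
      have := constant_of_has_deriv_right_zero (f := g) (a := y) (b := 0)
        (fun z hz' => ((hgd z (hsub hz')).continuousAt).continuousWithinAt)
        (fun z hz' => ((hgd z (hsub (Set.Ico_subset_Icc_self hz'))).hasDerivWithinAt))
        0 (Set.right_mem_Icc.2 hy0.le)
      rw [this]
    · rfl
    · have hsub : Set.Icc 0 y ⊆ {z : ℝ | |z| < 1} := by
        intro z hz'
        rw [Set.mem_setOf_eq, abs_lt]
        rw [abs_lt] at hy
        exact ⟨by linarith [hz'.1], by linarith [hz'.2]⟩
      have := constant_of_has_deriv_right_zero (f := g) (a := 0) (b := y)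
        (fun z hz' => ((hgd z (hsub hz')).continuousAt).continuousWithinAt)
        (fun z hz' => ((hgd z (hsub (Set.Ico_subset_Icc_self hz'))).hasDerivWithinAt))
        y (Set.right_mem_Icc.2 hy0.le)
      exact this
  have hy1 : 0 < 1 + y := by rw [abs_lt] at hy; linarith
  have hg0 : g 0 = 1 := by simp [hg, hf0]
  have : f y * (1 + y) ^ (-α) = 1 := by
    calc f y * (1 + y) ^ (-α) = g y := rfl
      _ = g 0 := key
      _ = 1 := hg0
  have hne : (1 + y) ^ (-α) ≠ 0 := (Real.rpow_pos_of_pos hy1 _).ne'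
  rw [show (1 + y) ^ α = ((1 + y) ^ (-α))⁻¹ by
    rw [← Real.rpow_neg hy1.le, neg_neg]]
  field_simp at this ⊢
  linarith [this]

/-- THE primitive `W(m) = ∫₀^m x^(q-1) (1-x²)^α dx`. -/
noncomputable def Wfun (α q m : ℝ) : ℝ := ∫ x in (0:ℝ)..m, x ^ (q - 1) * (1 - x ^ 2) ^ α

/- ### basic facts from the hypotheses -/

lemma basic_facts {α p : ℝ} (hα : 0 ≤ α)
    (hp1 : 2 + α + Real.sqrt (α ^ 2 + (7 / 2) * α + 3) ≤ p) (hp2 : p < 2 * (2 + α)) :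
    1 < p - 2 * α - 2 ∧ 0 < p ∧ (2 + α) / p < 1 ∧ 0 < 8 + 4 * α - 2 * p ∧
      8 + 4 * α - 2 * p ≤ (2 + α) / p ∧ 0 < (2 + α) / p := by
  have h3 : (0:ℝ) ≤ α ^ 2 + (7 / 2) * α + 3 := by nlinarith
  have ht0 : 0 ≤ Real.sqrt (α ^ 2 + (7 / 2) * α + 3) := Real.sqrt_nonneg _
  have ht2 : (Real.sqrt (α ^ 2 + (7 / 2) * α + 3)) ^ 2 = α ^ 2 + (7 / 2) * α + 3 :=
    Real.sq_sqrt h3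
  set t := Real.sqrt (α ^ 2 + (7 / 2) * α + 3) with hts
  have htα : 1 + α < t := by nlinarith
  have hp0 : 0 < p := by linarith
  have hq : 1 < p - 2 * α - 2 := by linarith
  refine ⟨hq, hp0, ?_, by linarith, ?_, by positivity⟩
  · rw [div_lt_one hp0]; linarith
  · rw [le_div_iff₀ hp0]
    have hpt : t ≤ p - (2 + α) := by linarith
    have h4 : t ^ 2 ≤ (p - (2 + α)) ^ 2 := by nlinarith
    nlinarith

/- ### the integrand of W -/

lemma g_meas (α q : ℝ) : Measurable (fun x : ℝ => x ^ (q - 1) * (1 - x ^ 2) ^ α) := by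
  fun_prop

lemma g_nonneg' {α q x : ℝ} (hx : 0 ≤ x) (hx1 : x ≤ 1) :
    0 ≤ x ^ (q - 1) * (1 - x ^ 2) ^ α :=
  mul_nonneg (Real.rpow_nonneg hx _) (Real.rpow_nonneg (by nlinarith) _)

lemma g_le_one {α q x : ℝ} (hα : 0 ≤ α) (hq : 1 ≤ q) (hx : 0 ≤ x) (hx1 : x ≤ 1) :
    x ^ (q - 1) * (1 - x ^ 2) ^ α ≤ 1 := by
  have h1 : x ^ (q - 1) ≤ 1 := Real.rpow_le_one hx hx1 (by linarith)
  have h2 : (1 - x ^ 2) ^ α ≤ 1 := Real.rpow_le_one (by nlinarith) (by nlinarith) hα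
  calc x ^ (q - 1) * (1 - x ^ 2) ^ α
      ≤ 1 * 1 := mul_le_mul h1 h2 (Real.rpow_nonneg (by nlinarith) _) zero_le_one
    _ = 1 := by norm_num

lemma g_intervalIntegrable {α q : ℝ} (hα : 0 ≤ α) (hq : 1 ≤ q) {u v : ℝ}
    (hu : u ∈ Set.Icc (0:ℝ) 1) (hv : v ∈ Set.Icc (0:ℝ) 1) :
    IntervalIntegrable (fun x : ℝ => x ^ (q - 1) * (1 - x ^ 2) ^ α) volume u v := by
  refine (_root_.intervalIntegrable_const (c := (1:ℝ))).mono_fun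
    ((g_meas α q).aestronglyMeasurable.restrict) ?_
  refine (ae_restrict_iff' measurableSet_uIoc).2 (Filter.Eventually.of_forall (fun x hx => ?_))
  have hx0 : 0 ≤ x := le_trans (le_min hu.1 hv.1) (le_of_lt hx.1)
  have hx1 : x ≤ 1 := le_trans hx.2 (max_le hu.2 hv.2)
  simp only [Real.norm_eq_abs, abs_one]
  rw [abs_of_nonneg (g_nonneg' hx0 hx1)]
  exact g_le_one hα hq hx0 hx1

lemma Wfun_nonneg {α q : ℝ} (hα : 0 ≤ α) (hq : 1 ≤ q) {m : ℝ} (hm0 : 0 ≤ m) (hm1 : m ≤ 1) :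
    0 ≤ Wfun α q m := by
  refine intervalIntegral.integral_nonneg hm0 (fun x hx => g_nonneg' hx.1 (le_trans hx.2 hm1))

lemma Wfun_le_one {α q : ℝ} (hα : 0 ≤ α) (hq : 1 ≤ q) {m : ℝ} (hm0 : 0 ≤ m) (hm1 : m ≤ 1) :
    Wfun α q m ≤ 1 := by
  have h1 : Wfun α q m ≤ ∫ x in (0:ℝ)..m, (1:ℝ) := by
    refine intervalIntegral.integral_mono_on hm0
      (g_intervalIntegrable hα hq ⟨le_rfl, zero_le_one⟩ ⟨hm0, hm1⟩) _root_.intervalIntegrable_const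
      (fun x hx => g_le_one hα hq hx.1 (le_trans hx.2 hm1))
  simpa using h1.trans (by simp [hm1])

/- ### the series identity : tsum = Wfun -/

lemma Wfun_eq_tsum {α q : ℝ} (hα : 0 ≤ α) (hq : 1 < q) {m : ℝ} (hm0 : 0 ≤ m) (hm1 : m ≤ 1) :
    (∑' k : ℕ, gBinom α k * (-1) ^ k * m ^ (q + 2 * (k:ℝ)) / (q + 2 * (k:ℝ)))
      = Wfun α q m := by
  have hqk : ∀ k : ℕ, 0 < q + 2 * (k:ℝ) := fun k => by
    have : (0:ℝ) ≤ (k:ℝ) := Nat.cast_nonneg k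
    linarith
  rcases eq_or_lt_of_le hm0 with hm | hm
  · rw [← hm]
    have : ∀ k : ℕ, gBinom α k * (-1) ^ k * (0:ℝ) ^ (q + 2 * (k:ℝ)) / (q + 2 * (k:ℝ)) = 0 :=
      fun k => by rw [Real.zero_rpow (hqk k).ne', mul_zero, zero_div]
    rw [tsum_congr this, tsum_zero, Wfun, intervalIntegral.integral_same]
  -- main case 0 < m
  have hInt : ∀ (r : ℝ) (k : ℕ),
      ∫ x in Set.Ioo (0:ℝ) m, r * x ^ (q - 1 + 2 * (k:ℝ))
        = r * (m ^ (q + 2 * (k:ℝ)) / (q + 2 * (k:ℝ))) := by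
    intro r k
    have hk0 : (0:ℝ) ≤ (k:ℝ) := Nat.cast_nonneg k
    rw [MeasureTheory.integral_const_mul]
    congr 1
    rw [← MeasureTheory.integral_Ioc_eq_integral_Ioo,
      ← intervalIntegral.integral_of_le hm0]
    rw [integral_rpow (Or.inl (by linarith : (-1:ℝ) < q - 1 + 2 * (k:ℝ)))]
    rw [Real.zero_rpow (by linarith : q - 1 + 2 * (k:ℝ) + 1 ≠ 0)]
    rw [show q - 1 + 2 * (k:ℝ) + 1 = q + 2 * (k:ℝ) by ring]
    ring
  set F : ℕ → ℝ → ℝ := fun k x => (gBinom α k * (-1) ^ k) * x ^ (q - 1 + 2 * (k:ℝ)) with hF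
  have hFmeas : ∀ k, Measurable (F k) := fun k => by
    rw [hF]; fun_prop
  have hrpow_le_one : ∀ (k : ℕ) (x : ℝ), x ∈ Set.Ioo (0:ℝ) m →
      x ^ (q - 1 + 2 * (k:ℝ)) ≤ 1 := by
    intro k x hx
    have hk0 : (0:ℝ) ≤ (k:ℝ) := Nat.cast_nonneg k
    exact Real.rpow_le_one hx.1.le (le_trans hx.2.le hm1) (by linarith)
  have hFint : ∀ k, IntegrableOn (F k) (Set.Ioo 0 m) volume := by
    intro k
    refine Integrable.mono' (integrable_const (|gBinom α k|))
      ((hFmeas k).aestronglyMeasurable.restrict)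
      ((ae_restrict_iff' measurableSet_Ioo).2 (Filter.Eventually.of_forall (fun x hx => ?_)))
    rw [hF]
    simp only [Real.norm_eq_abs, abs_mul, abs_pow, abs_neg, abs_one, one_pow, mul_one]
    rw [Real.abs_rpow_of_nonneg hx.1.le]
    calc |gBinom α k| * |x| ^ (q - 1 + 2 * (k:ℝ))
        ≤ |gBinom α k| * 1 := by
          refine mul_le_mul_of_nonneg_left ?_ (abs_nonneg _)
          rw [abs_of_nonneg hx.1.le]
          exact hrpow_le_one k x hx
      _ = |gBinom α k| := mul_one _
  have hnorm : ∀ k, (∫ x in Set.Ioo (0:ℝ) m, ‖F k x‖)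
      = |gBinom α k| * (m ^ (q + 2 * (k:ℝ)) / (q + 2 * (k:ℝ))) := by
    intro k
    rw [← hInt (|gBinom α k|) k]
    refine MeasureTheory.setIntegral_congr_fun measurableSet_Ioo (fun x hx => ?_)
    rw [hF]
    simp only [Real.norm_eq_abs, abs_mul, abs_pow, abs_neg, abs_one, one_pow, mul_one]
    rw [Real.abs_rpow_of_nonneg hx.1.le, abs_of_nonneg hx.1.le]
  have hsummable : Summable (fun k => ∫ x in Set.Ioo (0:ℝ) m, ‖F k x‖) := by
    have base : Summable (fun n : ℕ => (1:ℝ) / (n:ℝ) ^ 2) := by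
      exact_mod_cast Real.summable_one_div_nat_pow.mpr one_lt_two
    have base' : Summable (fun k : ℕ => ((2 + 2*α) ^ ⌈α⌉₊) * ((1:ℝ) / ((k:ℝ) + 1) ^ 2)) := by
      refine Summable.mul_left _ ?_
      have := (summable_nat_add_iff 1).2 base
      refine this.congr (fun k => ?_)
      push_cast
      ring
    refine Summable.of_nonneg_of_le
      (fun k => MeasureTheory.integral_nonneg (fun x => norm_nonneg _)) (fun k => ?_) base'
    rw [hnorm k]
    have hk0 : (0:ℝ) ≤ (k:ℝ) := Nat.cast_nonneg k
    have h1 : |gBinom α k| ≤ (2 + 2*α) ^ ⌈α⌉₊ / ((k:ℝ) + 1) := by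
      rw [le_div_iff₀ (by linarith)]
      exact gBinom_abs_le α hα k
    have h2 : m ^ (q + 2 * (k:ℝ)) ≤ 1 := Real.rpow_le_one hm0 hm1 (hqk k).le
    have h3 : (1:ℝ) / (q + 2 * (k:ℝ)) ≤ 1 / ((k:ℝ) + 1) := by
      refine one_div_le_one_div_of_le (by linarith) (by linarith)
    calc |gBinom α k| * (m ^ (q + 2 * (k:ℝ)) / (q + 2 * (k:ℝ)))
        ≤ ((2 + 2*α) ^ ⌈α⌉₊ / ((k:ℝ) + 1)) * (1 / ((k:ℝ) + 1)) := by
          refine mul_le_mul h1 ?_ (by positivity) (by positivity)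
          rw [div_le_div_iff₀ (hqk k) (by linarith)]
          nlinarith [Real.rpow_nonneg hm0 (q + 2 * (k:ℝ))]
      _ = ((2 + 2*α) ^ ⌈α⌉₊) * ((1:ℝ) / ((k:ℝ) + 1) ^ 2) := by
          field_simp
  -- the pointwise binomial identity
  have hpoint : ∀ x ∈ Set.Ioo (0:ℝ) m,
      (∑' k : ℕ, F k x) = x ^ (q - 1) * (1 - x ^ 2) ^ α := by
    intro x hx
    have hx0 : 0 < x := hx.1
    have hx1 : x < 1 := lt_of_lt_of_le hx.2 hm1
    have habs : |(-(x^2) : ℝ)| < 1 := by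
      rw [abs_neg, abs_of_nonneg (sq_nonneg x)]
      nlinarith
    have hterm : ∀ k : ℕ, F k x = x ^ (q - 1) * (gBinom α k * (-(x^2)) ^ k) := by
      intro k
      rw [hF]
      simp only
      rw [show q - 1 + 2 * (k:ℝ) = (q - 1) + ((2 * k : ℕ) : ℝ) by push_cast; ring]
      rw [Real.rpow_add hx0, Real.rpow_natCast, pow_mul]
      rw [show (-(x^2) : ℝ) = (-1) * x^2 by ring, mul_pow]
      ring
    rw [tsum_congr hterm, tsum_mul_left, binomial_tsum α hα habs]
    rw [show (1 + -(x^2) : ℝ) = 1 - x^2 by ring]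
  calc (∑' k : ℕ, gBinom α k * (-1) ^ k * m ^ (q + 2 * (k:ℝ)) / (q + 2 * (k:ℝ)))
      = ∑' k : ℕ, ∫ x in Set.Ioo (0:ℝ) m, F k x := by
        refine tsum_congr (fun k => ?_)
        rw [hInt (gBinom α k * (-1)^k) k]
        ring
    _ = ∫ x in Set.Ioo (0:ℝ) m, ∑' k : ℕ, F k x :=
        MeasureTheory.integral_tsum_of_summable_integral_norm hFint hsummable
    _ = ∫ x in Set.Ioo (0:ℝ) m, x ^ (q - 1) * (1 - x ^ 2) ^ α :=
        MeasureTheory.setIntegral_congr_fun measurableSet_Ioo (fun x hx => hpoint x hx)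
    _ = Wfun α q m := by
        rw [Wfun, intervalIntegral.integral_of_le hm.le,
          MeasureTheory.integral_Ioc_eq_integral_Ioo]

lemma sq_mem_Icc {s : ℝ} (hs : s ∈ Set.Icc (0:ℝ) 1) : s ^ 2 ∈ Set.Icc (0:ℝ) 1 :=
  ⟨sq_nonneg s, by nlinarith [hs.1, hs.2]⟩

lemma Kfun_eq {α p : ℝ} (hα : 0 ≤ α) (hq : 1 < p - 2 * α - 2) {s t : ℝ}
    (hs : s ∈ Set.Icc (0:ℝ) 1) (ht : t ∈ Set.Icc (0:ℝ) 1) :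
    Kfun α p s t = Wfun α (p - 2 * α - 2) (max (s ^ 2) (t ^ 2)) := by
  rw [Kfun]
  exact Wfun_eq_tsum hα hq (le_max_of_le_left (sq_mem_Icc hs).1)
    (max_le (sq_mem_Icc hs).2 (sq_mem_Icc ht).2)

lemma Hfun_eq {α p : ℝ} (hα : 0 ≤ α) (hq : 1 < p - 2 * α - 2) (s : ℝ) :
    Hfun α p s = Wfun α (p - 2 * α - 2) 1 - 1 / (2 * (α + 1)) * (1 - s ^ 4) ^ (α + 1) := by
  rw [Hfun]
  congr 1
  rw [← Wfun_eq_tsum hα hq (zero_le_one) le_rfl]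
  refine tsum_congr (fun k => ?_)
  rw [Real.one_rpow, mul_one]

/- ### psiFn basics -/

lemma psi_meas (α p : ℝ) : Measurable (psiFn α p) := by
  unfold psiFn; fun_prop

lemma psi_nonneg {α p t : ℝ} (ht0 : 0 ≤ t) (ht1 : t ≤ 1) : 0 ≤ psiFn α p t :=
  mul_nonneg (Real.rpow_nonneg ht0 _) (Real.rpow_nonneg (by linarith) _)

lemma psi_pos {α p t : ℝ} (ht0 : 0 < t) (ht1 : t < 1) : 0 < psiFn α p t :=
  mul_pos (Real.rpow_pos_of_pos ht0 _) (Real.rpow_pos_of_pos (by linarith) _)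

lemma psi_contAt {α p t : ℝ} (ht0 : 0 < t) (ht1 : t < 1) : ContinuousAt (psiFn α p) t := by
  unfold psiFn
  refine ContinuousAt.mul (Real.continuousAt_rpow_const t _ (Or.inl ht0.ne')) ?_
  exact (Real.continuousAt_rpow_const (1 - t) _ (Or.inl (by linarith : (1:ℝ) - t ≠ 0))).comp
    ((continuous_const.sub continuous_id).continuousAt)

lemma psi_intervalIntegrable {α p : ℝ} (ha0 : 0 < (2 + α) / p) (ha1 : (2 + α) / p < 1) :
    IntervalIntegrable (psiFn α p) volume 0 1 := by
  have hc := Complex.betaIntegral_convergent (u := (((2 + α) / p : ℝ):ℂ))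
    (v := ((1 - (2 + α) / p : ℝ):ℂ)) (by simpa using ha0) (by simp; linarith)
  refine hc.norm.mono_fun ((psi_meas α p).aestronglyMeasurable.restrict) ?_
  refine (ae_restrict_iff' measurableSet_uIoc).2 (Filter.Eventually.of_forall (fun x hx => ?_))
  rw [Set.uIoc_of_le (zero_le_one' ℝ)] at hx
  have hx0 : 0 < x := hx.1
  have hkey : psiFn α p x = ‖(x:ℂ) ^ ((((2 + α) / p : ℝ):ℂ) - 1) *
      (1 - (x:ℂ)) ^ (((1 - (2 + α) / p : ℝ):ℂ) - 1)‖ := by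
    rcases eq_or_lt_of_le hx.2 with h1 | h1
    · rw [h1]
      have hw : (((1 - (2 + α) / p : ℝ):ℂ) - 1) ≠ 0 := by
        intro h
        have h2 := congrArg Complex.re h
        simp at h2
        rcases h2 with h' | h' <;> simp [h'] at ha0
      rw [psiFn]
      rw [show ((1:ℝ) - 1) = 0 by ring, Real.zero_rpow (by linarith : -((2 + α) / p) ≠ 0),
        mul_zero]
      rw [show ((1:ℂ) - ((1:ℝ):ℂ)) = 0 by norm_num, Complex.zero_cpow hw, mul_zero, norm_zero]
    · rw [psiFn, norm_mul]
      rw [Complex.norm_cpow_eq_rpow_re_of_pos hx0]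
      rw [show ((1:ℂ) - (x:ℂ)) = (((1 - x : ℝ)):ℂ) by push_cast; ring]
      rw [Complex.norm_cpow_eq_rpow_re_of_pos (by linarith : (0:ℝ) < 1 - x)]
      rw [show ((((2 + α) / p : ℝ):ℂ) - 1).re = (2 + α) / p - 1 by simp,
        show ((((1 - (2 + α) / p : ℝ)):ℂ) - 1).re = 1 - (2 + α) / p - 1 by simp,
        show (1 - (2 + α) / p - 1 : ℝ) = -((2 + α) / p) by ring]
  have h2 : 0 ≤ psiFn α p x := psi_nonneg hx0.le hx.2
  simp only [Real.norm_eq_abs]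
  rw [abs_of_nonneg h2, abs_of_nonneg (norm_nonneg _), hkey]

lemma betaInc_eq (α p T : ℝ) :
    betaInc T ((2 + α) / p) (1 - (2 + α) / p) = ∫ t in (0:ℝ)..T, psiFn α p t := by
  rw [betaInc]
  refine intervalIntegral.integral_congr (fun x hx => ?_)
  rw [psiFn, show (1 - (2 + α) / p) - 1 = -((2 + α) / p) by ring]

lemma betaFn_eq (α p : ℝ) :
    betaFn ((2 + α) / p) (1 - (2 + α) / p) = ∫ t in (0:ℝ)..1, psiFn α p t := by
  rw [betaFn]
  refine intervalIntegral.integral_congr (fun x hx => ?_)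
  rw [psiFn, show (1 - (2 + α) / p) - 1 = -((2 + α) / p) by ring]

/- ### the key inequality : P(s) ≤ B s^c -/

lemma key_ineq {α p : ℝ} (hα : 0 ≤ α)
    (hp1 : 2 + α + Real.sqrt (α ^ 2 + (7 / 2) * α + 3) ≤ p) (hp2 : p < 2 * (2 + α))
    {s : ℝ} (hs : s ∈ Set.Icc (0:ℝ) 1) :
    (∫ t in (0:ℝ)..s, psiFn α p t)
      ≤ (∫ t in (0:ℝ)..1, psiFn α p t) * s ^ (8 + 4 * α - 2 * p) := by
  obtain ⟨hq, hp0, ha1, hc0, hca, ha0⟩ := basic_facts hα hp1 hp2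
  set a : ℝ := (2 + α) / p with ha
  set c : ℝ := 8 + 4 * α - 2 * p with hc
  set B : ℝ := ∫ t in (0:ℝ)..1, psiFn α p t with hB
  have hψII : IntervalIntegrable (psiFn α p) volume 0 1 := psi_intervalIntegrable ha0 ha1
  have hB0 : 0 < B := by
    rw [hB]
    exact intervalIntegral_pos_of_pos_on hψII (fun x hx => psi_pos hx.1 hx.2) zero_lt_one
  rcases eq_or_lt_of_le hs.1 with h0 | h0
  · rw [← h0, intervalIntegral.integral_same, Real.zero_rpow hc0.ne', mul_zero]
  rcases eq_or_lt_of_le hs.2 with h1 | h1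
  · rw [h1, Real.one_rpow, mul_one]
  set P : ℝ → ℝ := fun u => ∫ t in (0:ℝ)..u, psiFn α p t with hP
  set R : ℝ → ℝ := fun u => P u - B * u ^ c with hR
  have hPcont : ContinuousOn P (Set.Icc 0 1) := by
    have h := intervalIntegral.continuousOn_primitive_interval (a := (0:ℝ)) (b := (1:ℝ))
      (μ := volume) (f := psiFn α p) ?_
    · rwa [Set.uIcc_of_le (zero_le_one' ℝ)] at h
    · rw [Set.uIcc_of_le (zero_le_one' ℝ)]
      exact (integrableOn_Icc_iff_integrableOn_Ioc).2
        ((intervalIntegrable_iff_integrableOn_Ioc_of_le (zero_le_one' ℝ)).1 hψII)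
  have hRcont : ContinuousOn R (Set.Icc 0 1) := by
    refine hPcont.sub (Continuous.continuousOn ?_)
    refine Continuous.mul continuous_const ?_
    exact continuous_iff_continuousAt.2
      (fun x => Real.continuousAt_rpow_const x c (Or.inr hc0.le))
  have hRderiv : ∀ u, u ∈ Set.Ioo (0:ℝ) 1 →
      HasDerivAt R (psiFn α p u - B * (c * u ^ (c - 1))) u := by
    intro u hu
    have h1' : HasDerivAt P (psiFn α p u) u := by
      refine intervalIntegral.integral_hasDerivAt_right (hψII.mono_set ?_)
        ⟨Set.univ, Filter.univ_mem, (psi_meas α p).aestronglyMeasurable.restrict⟩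
        (psi_contAt hu.1 hu.2)
      rw [Set.uIcc_of_le hu.1.le, Set.uIcc_of_le (zero_le_one' ℝ)]
      exact Set.Icc_subset_Icc le_rfl hu.2.le
    have h2' : HasDerivAt (fun u : ℝ => B * u ^ c) (B * (c * u ^ (c - 1))) u :=
      (Real.hasDerivAt_rpow_const (Or.inl hu.1.ne')).const_mul B
    exact h1'.sub h2'
  have hgmono : ∀ u v : ℝ, 0 < u → u ≤ v → v < 1 →
      u ^ (a - c) * (1 - u) ^ (-a) ≤ v ^ (a - c) * (1 - v) ^ (-a) := by
    intro u v hu huv hv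
    have h1u : 0 < 1 - u := by linarith
    have h1v : 0 < 1 - v := by linarith
    refine mul_le_mul (Real.rpow_le_rpow hu.le huv (by linarith)) ?_
      (Real.rpow_nonneg h1u.le _) (Real.rpow_nonneg (by linarith) _)
    rw [Real.rpow_neg h1u.le, Real.rpow_neg h1v.le]
    refine inv_anti₀ (Real.rpow_pos_of_pos h1v _) ?_
    exact Real.rpow_le_rpow h1v.le (by linarith) ha0.le
  have hψeq : ∀ u : ℝ, 0 < u → u < 1 →
      psiFn α p u = (u ^ (a - c) * (1 - u) ^ (-a)) * u ^ (c - 1) := by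
    intro u hu hu1
    rw [psiFn, ← ha]
    rw [show a - 1 = (a - c) + (c - 1) by ring, Real.rpow_add hu]
    ring
  have hR1 : R 1 = 0 := by
    simp only [hR, hP]
    rw [← hB, Real.one_rpow, mul_one, sub_self]
  have hR0 : R 0 = 0 := by
    simp only [hR, hP]
    rw [Real.zero_rpow hc0.ne', mul_zero, intervalIntegral.integral_same, sub_zero]
  have hRs : R s ≤ 0 := by
    rcases le_or_gt (s ^ (a - c) * (1 - s) ^ (-a)) (c * B) with hcase | hcase
    · have hanti : AntitoneOn R (Set.Icc 0 s) := by
        refine antitoneOn_of_deriv_nonpos (convex_Icc 0 s)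
          (hRcont.mono (Set.Icc_subset_Icc le_rfl h1.le)) (fun u hu => ?_) (fun u hu => ?_)
        · rw [interior_Icc] at hu
          have hu' : u ∈ Set.Ioo (0:ℝ) 1 := ⟨hu.1, lt_trans hu.2 h1⟩
          exact (hRderiv u hu').differentiableAt.differentiableWithinAt
        · rw [interior_Icc] at hu
          have hu' : u ∈ Set.Ioo (0:ℝ) 1 := ⟨hu.1, lt_trans hu.2 h1⟩
          rw [(hRderiv u hu').deriv]
          have h3 : psiFn α p u ≤ (c * B) * u ^ (c - 1) := by
            rw [hψeq u hu'.1 hu'.2]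
            refine mul_le_mul_of_nonneg_right ?_ (Real.rpow_nonneg hu'.1.le _)
            exact le_trans (hgmono u s hu'.1 hu.2.le h1) hcase
          nlinarith [h3]
      have h4 := hanti (Set.left_mem_Icc.2 h0.le) (Set.right_mem_Icc.2 h0.le) h0.le
      linarith [hR0 ▸ h4]
    · have hmono : MonotoneOn R (Set.Icc s 1) := by
        refine monotoneOn_of_deriv_nonneg (convex_Icc s 1)
          (hRcont.mono (Set.Icc_subset_Icc h0.le le_rfl)) (fun u hu => ?_) (fun u hu => ?_)
        · rw [interior_Icc] at hu
          have hu' : u ∈ Set.Ioo (0:ℝ) 1 := ⟨lt_trans h0 hu.1, hu.2⟩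
          exact (hRderiv u hu').differentiableAt.differentiableWithinAt
        · rw [interior_Icc] at hu
          have hu' : u ∈ Set.Ioo (0:ℝ) 1 := ⟨lt_trans h0 hu.1, hu.2⟩
          rw [(hRderiv u hu').deriv]
          have h3 : (c * B) * u ^ (c - 1) ≤ psiFn α p u := by
            rw [hψeq u hu'.1 hu'.2]
            refine mul_le_mul_of_nonneg_right ?_ (Real.rpow_nonneg hu'.1.le _)
            exact le_trans hcase.le (hgmono s u h0 hu.1.le hu'.2)
          nlinarith [h3]
      have h4 := hmono (Set.left_mem_Icc.2 h1.le) (Set.right_mem_Icc.2 h1.le) h1.le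
      linarith [hR1 ▸ h4]
  have h5 : P s - B * s ^ c ≤ 0 := hRs
  have h6 : P s = ∫ t in (0:ℝ)..s, psiFn α p t := rfl
  linarith [h6 ▸ h5]

set_option maxHeartbeats 2000000 in
theorem key_lemma_large_p (α p s : ℝ) (hα : 0 ≤ α)
    (hp1 : 2 + α + Real.sqrt (α ^ 2 + (7 / 2) * α + 3) ≤ p) (hp2 : p < 2 * (2 + α))
    (hs : s ∈ Set.Icc (0:ℝ) 1) :
    betaFn ((2 + α) / p) (1 - (2 + α) / p) * Hfun α p s
      ≤ ∫ t in (0:ℝ)..1, psiFn α p t * Kfun α p s t := by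
  obtain ⟨hq, hp0, ha1, hc0, hca, ha0⟩ := basic_facts hα hp1 hp2
  have hq1le : (1:ℝ) ≤ p - 2 * α - 2 := hq.le
  have hα1 : α + 1 ≠ 0 := by linarith
  have hψII : IntervalIntegrable (psiFn α p) volume 0 1 := psi_intervalIntegrable ha0 ha1
  have hψIIsub : ∀ x y : ℝ, x ∈ Set.Icc (0:ℝ) 1 → y ∈ Set.Icc (0:ℝ) 1 →
      IntervalIntegrable (psiFn α p) volume x y := by
    intro x y hx hy
    refine hψII.mono_set ?_
    rw [Set.uIcc_of_le (zero_le_one' ℝ)]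
    exact Set.uIcc_subset_Icc hx hy
  -- W basics
  have hWabs : ∀ m : ℝ, m ∈ Set.Icc (0:ℝ) 1 → |Wfun α (p - 2 * α - 2) m| ≤ 1 := by
    intro m hm
    rw [abs_of_nonneg (Wfun_nonneg hα hq1le hm.1 hm.2)]
    exact Wfun_le_one hα hq1le hm.1 hm.2
  have hWcont : ContinuousOn (Wfun α (p - 2 * α - 2)) (Set.Icc 0 1) := by
    unfold Wfun
    have h := intervalIntegral.continuousOn_primitive_interval (a := (0:ℝ)) (b := (1:ℝ))
      (μ := volume) (f := fun x : ℝ => x ^ ((p - 2 * α - 2) - 1) * (1 - x ^ 2) ^ α) ?_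
    · rwa [Set.uIcc_of_le (zero_le_one' ℝ)] at h
    · rw [Set.uIcc_of_le (zero_le_one' ℝ)]
      exact (integrableOn_Icc_iff_integrableOn_Ioc).2
        ((intervalIntegrable_iff_integrableOn_Ioc_of_le (zero_le_one' ℝ)).1
          (g_intervalIntegrable hα hq1le ⟨le_rfl, zero_le_one⟩ ⟨zero_le_one, le_rfl⟩))
  have hmax : ∀ t : ℝ, t ∈ Set.Icc (0:ℝ) 1 → max (s ^ 2) (t ^ 2) ∈ Set.Icc (0:ℝ) 1 :=
    fun t ht => ⟨le_max_of_le_left (sq_mem_Icc hs).1,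
      max_le (sq_mem_Icc hs).2 (sq_mem_Icc ht).2⟩
  -- interval integrability of ψ times W-composites
  have hprod_II : ∀ (h : ℝ → ℝ), ContinuousOn h (Set.Icc (0:ℝ) 1) →
      (∀ t ∈ Set.Icc (0:ℝ) 1, h t ∈ Set.Icc (0:ℝ) 1) →
      ∀ x y : ℝ, x ∈ Set.Icc (0:ℝ) 1 → y ∈ Set.Icc (0:ℝ) 1 →
      IntervalIntegrable (fun t => psiFn α p t * Wfun α (p - 2 * α - 2) (h t)) volume x y := by
    intro h hcont hmaps x y hx hy
    have hsub : Set.uIoc x y ⊆ Set.Icc (0:ℝ) 1 := by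
      refine le_trans Set.Ioc_subset_Icc_self ?_
      rw [← Set.uIcc_of_le (zero_le_one' ℝ)]
      exact Set.uIcc_subset_uIcc (by rwa [Set.uIcc_of_le (zero_le_one' ℝ)])
        (by rwa [Set.uIcc_of_le (zero_le_one' ℝ)])
    refine (hψIIsub x y hx hy).mono_fun ?_ ?_
    · refine AEStronglyMeasurable.mul ((psi_meas α p).aestronglyMeasurable.restrict) ?_
      refine ContinuousOn.aestronglyMeasurable ?_ measurableSet_uIoc
      exact (hWcont.comp (hcont.mono hsub) (fun t ht => hmaps t (hsub ht))).mono
        (le_refl _)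
    · refine (ae_restrict_iff' measurableSet_uIoc).2
        (Filter.Eventually.of_forall (fun t ht => ?_))
      have ht' : t ∈ Set.Icc (0:ℝ) 1 := hsub ht
      simp only [Real.norm_eq_abs, abs_mul]
      have h1 : |Wfun α (p - 2 * α - 2) (h t)| ≤ 1 := hWabs _ (hmaps t ht')
      calc |psiFn α p t| * |Wfun α (p - 2 * α - 2) (h t)|
          ≤ |psiFn α p t| * 1 := mul_le_mul_of_nonneg_left h1 (abs_nonneg _)
        _ = |psiFn α p t| := mul_one _
  have hWsq_cont : ContinuousOn (fun t : ℝ => Wfun α (p - 2 * α - 2) (t ^ 2))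
      (Set.Icc (0:ℝ) 1) :=
    hWcont.comp ((continuous_pow 2).continuousOn) (fun x hx => sq_mem_Icc hx)
  have hWsqII : ∀ x y : ℝ, x ∈ Set.Icc (0:ℝ) 1 → y ∈ Set.Icc (0:ℝ) 1 →
      IntervalIntegrable (fun t => psiFn α p t * Wfun α (p - 2 * α - 2) (t ^ 2)) volume x y :=
    hprod_II _ ((continuous_pow 2).continuousOn) (fun t ht => sq_mem_Icc ht)
  have hWmaxII : ∀ x y : ℝ, x ∈ Set.Icc (0:ℝ) 1 → y ∈ Set.Icc (0:ℝ) 1 →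
      IntervalIntegrable (fun t => psiFn α p t * Wfun α (p - 2 * α - 2) (max (s ^ 2) (t ^ 2)))
        volume x y :=
    hprod_II _ ((continuous_const.max (continuous_pow 2)).continuousOn) hmax
  -- the comparison function
  set Δ : ℝ → ℝ := fun y =>
    (∫ t in (0:ℝ)..y, psiFn α p t) * Wfun α (p - 2 * α - 2) (y ^ 2)
    + (∫ t in y..(1:ℝ), psiFn α p t * Wfun α (p - 2 * α - 2) (t ^ 2))
    + (∫ t in (0:ℝ)..1, psiFn α p t) * (1 / (2 * (α + 1)) * (1 - y ^ 4) ^ (α + 1)) with hΔdef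
  -- derivative of Δ on (0,1), together with nonpositivity
  have hDer : ∀ u ∈ Set.Ioo (0:ℝ) 1, ∃ d, HasDerivAt Δ d u ∧ d ≤ 0 := by
    intro u hu
    have hu2 : u ^ 2 ∈ Set.Ioo (0:ℝ) 1 := ⟨pow_pos hu.1 2, by nlinarith [hu.1, hu.2]⟩
    -- FTC for P
    have hd1 : HasDerivAt (fun y => ∫ t in (0:ℝ)..y, psiFn α p t) (psiFn α p u) u := by
      refine intervalIntegral.integral_hasDerivAt_right (hψIIsub 0 u ⟨le_rfl, zero_le_one⟩
        ⟨hu.1.le, hu.2.le⟩) ⟨Set.univ, Filter.univ_mem,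
        (psi_meas α p).aestronglyMeasurable.restrict⟩ (psi_contAt hu.1 hu.2)
    -- FTC for W at u^2, composed with squaring
    have hgcont : ContinuousAt (fun x : ℝ => x ^ ((p - 2 * α - 2) - 1) * (1 - x ^ 2) ^ α)
        (u ^ 2) := by
      refine ContinuousAt.mul (Real.continuousAt_rpow_const _ _ (Or.inl (pow_pos hu.1 2).ne')) ?_
      refine ContinuousAt.rpow_const ((continuous_const.sub (continuous_pow 2)).continuousAt)
        (Or.inl ?_)
      have h4 : ((u ^ 2:ℝ)) ^ 2 < 1 := pow_lt_one₀ (sq_nonneg u) hu2.2 (by norm_num)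
      exact ne_of_gt (by linarith)
    have hdW : HasDerivAt (fun m => ∫ x in (0:ℝ)..m, x ^ ((p - 2 * α - 2) - 1) * (1 - x ^ 2) ^ α)
        ((u ^ 2) ^ ((p - 2 * α - 2) - 1) * (1 - (u ^ 2) ^ 2) ^ α) (u ^ 2) := by
      refine intervalIntegral.integral_hasDerivAt_right
        (g_intervalIntegrable hα hq1le ⟨le_rfl, zero_le_one⟩ ⟨hu2.1.le, hu2.2.le⟩)
        ⟨Set.univ, Filter.univ_mem, (g_meas _ _).aestronglyMeasurable.restrict⟩ hgcont
    have hd2 : HasDerivAt (fun y : ℝ => Wfun α (p - 2 * α - 2) (y ^ 2))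
        ((u ^ 2) ^ ((p - 2 * α - 2) - 1) * (1 - (u ^ 2) ^ 2) ^ α * ((2:ℕ) * u ^ 1)) u := by
      have h' := HasDerivAt.comp (h₂ := fun m => ∫ x in (0:ℝ)..m,
        x ^ ((p - 2 * α - 2) - 1) * (1 - x ^ 2) ^ α) (h := fun y : ℝ => y ^ 2) u hdW
        (hasDerivAt_pow 2 u)
      exact h'
    -- FTC (left endpoint) for the tail integral
    have hd3 : HasDerivAt
        (fun y => ∫ t in y..(1:ℝ), psiFn α p t * Wfun α (p - 2 * α - 2) (t ^ 2))
        (-(psiFn α p u * Wfun α (p - 2 * α - 2) (u ^ 2))) u := by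
      refine intervalIntegral.integral_hasDerivAt_left
        (hWsqII u 1 ⟨hu.1.le, hu.2.le⟩ ⟨zero_le_one, le_rfl⟩)
        ⟨Set.Ioo 0 1, Ioo_mem_nhds hu.1 hu.2, ?_⟩ ?_
      · exact ((psi_meas α p).aestronglyMeasurable.restrict).mul
          ((hWsq_cont.mono Set.Ioo_subset_Icc_self).aestronglyMeasurable measurableSet_Ioo)
      · exact (psi_contAt hu.1 hu.2).mul hd2.continuousAt
    -- derivative of the last term
    have hd4 : HasDerivAt
        (fun y : ℝ => (∫ t in (0:ℝ)..1, psiFn α p t) * (1 / (2 * (α + 1)) * (1 - y ^ 4) ^ (α + 1)))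
        ((∫ t in (0:ℝ)..1, psiFn α p t) *
          (1 / (2 * (α + 1)) * ((-(((4:ℕ)) * u ^ 3)) * (α + 1) * (1 - u ^ 4) ^ α))) u := by
      have hinner : HasDerivAt (fun y : ℝ => 1 - y ^ 4) (-((4:ℕ) * u ^ 3)) u :=
        (hasDerivAt_pow 4 u).const_sub 1
      have h4 : u ^ 4 < 1 := pow_lt_one₀ hu.1.le hu.2 (by norm_num)
      have hbase : (1:ℝ) - u ^ 4 ≠ 0 := ne_of_gt (by linarith)
      have hr := hinner.rpow_const (p := α + 1) (Or.inl hbase)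
      rw [show α + 1 - 1 = α by ring] at hr
      exact (hr.const_mul _).const_mul _
    have hdΔ : HasDerivAt Δ
        (psiFn α p u * Wfun α (p - 2 * α - 2) (u ^ 2)
          + (∫ t in (0:ℝ)..u, psiFn α p t) *
            ((u ^ 2) ^ ((p - 2 * α - 2) - 1) * (1 - (u ^ 2) ^ 2) ^ α * ((2:ℕ) * u ^ 1))
          + -(psiFn α p u * Wfun α (p - 2 * α - 2) (u ^ 2))
          + (∫ t in (0:ℝ)..1, psiFn α p t) *
            (1 / (2 * (α + 1)) * ((-(((4:ℕ)) * u ^ 3)) * (α + 1) * (1 - u ^ 4) ^ α))) u := by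
      rw [hΔdef]
      exact ((hd1.mul hd2).add hd3).add hd4
    refine ⟨_, hdΔ, ?_⟩
    -- now show the derivative is ≤ 0
    have hPu := key_ineq hα hp1 hp2 (s := u) ⟨hu.1.le, hu.2.le⟩
    have he1 : ((u ^ 2 : ℝ)) ^ ((p - 2 * α - 2) - 1) = u ^ (2 * ((p - 2 * α - 2) - 1)) := by
      rw [← Real.rpow_natCast u 2, ← Real.rpow_mul hu.1.le]
      norm_num
    have he2 : ((1:ℝ) - (u ^ 2) ^ 2) = 1 - u ^ 4 := by ring
    have hmul : u ^ (2 * ((p - 2 * α - 2) - 1)) * u ^ (8 + 4 * α - 2 * p) = u ^ 2 := by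
      rw [← Real.rpow_add hu.1,
        show 2 * ((p - 2 * α - 2) - 1) + (8 + 4 * α - 2 * p) = ((2:ℕ):ℝ) by push_cast; ring,
        Real.rpow_natCast]
    have hB0 : 0 < ∫ t in (0:ℝ)..1, psiFn α p t :=
      intervalIntegral_pos_of_pos_on hψII (fun x hx => psi_pos hx.1 hx.2) zero_lt_one
    have hkey : (∫ t in (0:ℝ)..u, psiFn α p t) *
        ((u ^ 2) ^ ((p - 2 * α - 2) - 1) * (1 - (u ^ 2) ^ 2) ^ α * ((2:ℕ) * u ^ 1))
        ≤ 2 * (∫ t in (0:ℝ)..1, psiFn α p t) * u ^ 3 * (1 - u ^ 4) ^ α := by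
      rw [he1, he2]
      have hfac : (0:ℝ) ≤ u ^ (2 * ((p - 2 * α - 2) - 1)) * (1 - u ^ 4) ^ α * (2 * u) := by
        have h4 : u ^ 4 < 1 := pow_lt_one₀ hu.1.le hu.2 (by norm_num)
        have h1 := Real.rpow_nonneg hu.1.le (2 * ((p - 2 * α - 2) - 1))
        have h2 := Real.rpow_nonneg (by linarith : (0:ℝ) ≤ 1 - u ^ 4) α
        exact mul_nonneg (mul_nonneg h1 h2) (by linarith [hu.1.le])
      calc (∫ t in (0:ℝ)..u, psiFn α p t) *
          (u ^ (2 * ((p - 2 * α - 2) - 1)) * (1 - u ^ 4) ^ α * ((2:ℕ) * u ^ 1))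
          = (u ^ (2 * ((p - 2 * α - 2) - 1)) * (1 - u ^ 4) ^ α * (2 * u)) *
            (∫ t in (0:ℝ)..u, psiFn α p t) := by push_cast; ring
        _ ≤ (u ^ (2 * ((p - 2 * α - 2) - 1)) * (1 - u ^ 4) ^ α * (2 * u)) *
            ((∫ t in (0:ℝ)..1, psiFn α p t) * u ^ (8 + 4 * α - 2 * p)) :=
            mul_le_mul_of_nonneg_left hPu hfac
        _ = 2 * (∫ t in (0:ℝ)..1, psiFn α p t) * u ^ 3 * (1 - u ^ 4) ^ α := by
            linear_combination (2 * u * (∫ t in (0:ℝ)..1, psiFn α p t) * (1 - u ^ 4) ^ α) * hmul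
    have heq4 : (∫ t in (0:ℝ)..1, psiFn α p t) *
        (1 / (2 * (α + 1)) * ((-(((4:ℕ)) * u ^ 3)) * (α + 1) * (1 - u ^ 4) ^ α))
        = -(2 * (∫ t in (0:ℝ)..1, psiFn α p t) * u ^ 3 * (1 - u ^ 4) ^ α) := by
      push_cast
      field_simp
      ring
    rw [heq4]
    linarith [hkey]
  -- continuity of Δ on [0,1]
  have hΔcont : ContinuousOn Δ (Set.Icc (0:ℝ) 1) := by
    rw [hΔdef]
    have c1 : ContinuousOn (fun y : ℝ => ∫ t in (0:ℝ)..y, psiFn α p t) (Set.Icc 0 1) := by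
      have h := intervalIntegral.continuousOn_primitive_interval (a := (0:ℝ)) (b := (1:ℝ))
        (μ := volume) (f := psiFn α p) ?_
      · rwa [Set.uIcc_of_le (zero_le_one' ℝ)] at h
      · rw [Set.uIcc_of_le (zero_le_one' ℝ)]
        exact (integrableOn_Icc_iff_integrableOn_Ioc).2
          ((intervalIntegrable_iff_integrableOn_Ioc_of_le (zero_le_one' ℝ)).1 hψII)
    have c3 : ContinuousOn
        (fun y : ℝ => ∫ t in y..(1:ℝ), psiFn α p t * Wfun α (p - 2 * α - 2) (t ^ 2))
        (Set.Icc 0 1) := by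
      have cprim : ContinuousOn
          (fun y : ℝ => ∫ t in (0:ℝ)..y, psiFn α p t * Wfun α (p - 2 * α - 2) (t ^ 2))
          (Set.Icc 0 1) := by
        have h := intervalIntegral.continuousOn_primitive_interval (a := (0:ℝ)) (b := (1:ℝ))
          (μ := volume) (f := fun t => psiFn α p t * Wfun α (p - 2 * α - 2) (t ^ 2)) ?_
        · rwa [Set.uIcc_of_le (zero_le_one' ℝ)] at h
        · rw [Set.uIcc_of_le (zero_le_one' ℝ)]
          exact (integrableOn_Icc_iff_integrableOn_Ioc).2
            ((intervalIntegrable_iff_integrableOn_Ioc_of_le (zero_le_one' ℝ)).1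
              (hWsqII 0 1 ⟨le_rfl, zero_le_one⟩ ⟨zero_le_one, le_rfl⟩))
      refine ((continuousOn_const (c := ∫ t in (0:ℝ)..1,
        psiFn α p t * Wfun α (p - 2 * α - 2) (t ^ 2))).sub cprim).congr (fun y hy => ?_)
      have hadd := intervalIntegral.integral_add_adjacent_intervals
        (hWsqII 0 y ⟨le_rfl, zero_le_one⟩ hy) (hWsqII y 1 hy ⟨zero_le_one, le_rfl⟩)
      simp only [Pi.sub_apply]
      linarith [hadd]
    have c4 : Continuous (fun y : ℝ =>
        (∫ t in (0:ℝ)..1, psiFn α p t) * (1 / (2 * (α + 1)) * (1 - y ^ 4) ^ (α + 1))) := by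
      refine continuous_const.mul (continuous_const.mul ?_)
      exact (continuous_const.sub (continuous_pow 4)).rpow_const
        (fun x => Or.inr (by linarith))
    exact ((c1.mul hWsq_cont).add c3).add c4.continuousOn
  -- Δ is antitone on [0,1]
  have hΔanti : AntitoneOn Δ (Set.Icc (0:ℝ) 1) := by
    refine antitoneOn_of_deriv_nonpos (convex_Icc 0 1) hΔcont (fun u hu => ?_) (fun u hu => ?_)
    · rw [interior_Icc] at hu
      obtain ⟨d, hd, _⟩ := hDer u hu
      exact hd.differentiableAt.differentiableWithinAt
    · rw [interior_Icc] at hu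
      obtain ⟨d, hd, hd0⟩ := hDer u hu
      rw [hd.deriv]
      exact hd0
  have hΔs := hΔanti hs (Set.right_mem_Icc.2 zero_le_one) hs.2
  -- evaluate Δ 1
  have hΔ1 : Δ 1 = (∫ t in (0:ℝ)..1, psiFn α p t) * Wfun α (p - 2 * α - 2) 1 := by
    rw [hΔdef]
    simp only [one_pow, intervalIntegral.integral_same]
    rw [show (1:ℝ) - 1 = 0 by ring, Real.zero_rpow hα1, mul_zero, mul_zero]
    ring
  -- rewrite the goal
  rw [betaFn_eq, Hfun_eq hα hq s]
  have hKrw : (∫ t in (0:ℝ)..1, psiFn α p t * Kfun α p s t)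
      = ∫ t in (0:ℝ)..1, psiFn α p t * Wfun α (p - 2 * α - 2) (max (s ^ 2) (t ^ 2)) := by
    refine intervalIntegral.integral_congr (fun t ht => ?_)
    rw [Set.uIcc_of_le (zero_le_one' ℝ)] at ht
    rw [Kfun_eq hα hq hs ht]
  rw [hKrw]
  have hsplit : (∫ t in (0:ℝ)..1, psiFn α p t * Wfun α (p - 2 * α - 2) (max (s ^ 2) (t ^ 2)))
      = (∫ t in (0:ℝ)..s, psiFn α p t * Wfun α (p - 2 * α - 2) (max (s ^ 2) (t ^ 2)))
      + ∫ t in s..(1:ℝ), psiFn α p t * Wfun α (p - 2 * α - 2) (max (s ^ 2) (t ^ 2)) :=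
    (intervalIntegral.integral_add_adjacent_intervals
      (hWmaxII 0 s ⟨le_rfl, zero_le_one⟩ hs) (hWmaxII s 1 hs ⟨zero_le_one, le_rfl⟩)).symm
  have hpiece1 : (∫ t in (0:ℝ)..s, psiFn α p t * Wfun α (p - 2 * α - 2) (max (s ^ 2) (t ^ 2)))
      = (∫ t in (0:ℝ)..s, psiFn α p t) * Wfun α (p - 2 * α - 2) (s ^ 2) := by
    rw [← intervalIntegral.integral_mul_const]
    refine intervalIntegral.integral_congr (fun t ht => ?_)
    rw [Set.uIcc_of_le hs.1] at ht
    rw [max_eq_left (pow_le_pow_left₀ ht.1 ht.2 2)]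
  have hpiece2 : (∫ t in s..(1:ℝ), psiFn α p t * Wfun α (p - 2 * α - 2) (max (s ^ 2) (t ^ 2)))
      = ∫ t in s..(1:ℝ), psiFn α p t * Wfun α (p - 2 * α - 2) (t ^ 2) := by
    refine intervalIntegral.integral_congr (fun t ht => ?_)
    rw [Set.uIcc_of_le hs.2] at ht
    rw [max_eq_right (pow_le_pow_left₀ hs.1 ht.1 2)]
  rw [hsplit, hpiece1, hpiece2]
  have hΔs' : Δ 1 ≤ Δ s := hΔs
  rw [hΔ1, hΔdef] at hΔs'
  simp only at hΔs'
  linarith [hΔs']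
end

section
/- Let x, y ∈ (0,1]. Then B(x,y) ≥ 1/x + 1/y − 1 and B(x,y) ≤ (1/(xy)) · (x+y)/(1+xy). -/
open MeasureTheory intervalIntegral

-- Key telescoping comparison lemma
lemma key1 (x y : ℝ) (hx0 : 0 < x) (hx1 : x ≤ 1) (hy0 : 0 < y) (hy1 : y ≤ 1) (n : ℕ) :
    (n.factorial : ℝ) * (∏ j ∈ Finset.range n, (x + y + j + 1)) * (((n:ℝ) + 1) * (1 + x*y)) ≤
    (∏ j ∈ Finset.range n, (x + j + 1)) * (∏ j ∈ Finset.range n, (y + j + 1)) * ((n:ℝ) + 1 + x*y) := by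
  have hkey : 0 ≤ x*y*(1 + x*y - x - y) := by nlinarith [mul_nonneg (mul_nonneg (mul_pos hx0 hy0).le (sub_nonneg.2 hx1)) (sub_nonneg.2 hy1)]
  induction n with
  | zero => simp
  | succ n ih =>
    have hP1 : (0:ℝ) ≤ ∏ j ∈ Finset.range n, (x + j + 1) :=
      Finset.prod_nonneg fun j _ => by positivity
    have hP2 : (0:ℝ) ≤ ∏ j ∈ Finset.range n, (y + j + 1) :=
      Finset.prod_nonneg fun j _ => by positivity
    rw [Finset.prod_range_succ, Finset.prod_range_succ, Finset.prod_range_succ,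
      Nat.factorial_succ]
    push_cast
    calc ((n:ℝ)+1) * (n.factorial:ℝ) * ((∏ j ∈ Finset.range n, (x + y + j + 1)) * (x+y+n+1))
          * (((n:ℝ)+1+1) * (1 + x*y))
        = ((n.factorial:ℝ) * (∏ j ∈ Finset.range n, (x + y + j + 1)) * (((n:ℝ)+1) * (1 + x*y)))
          * ((x+y+(n:ℝ)+1) * ((n:ℝ)+2)) := by ring
      _ ≤ ((∏ j ∈ Finset.range n, (x + j + 1)) * (∏ j ∈ Finset.range n, (y + j + 1))
            * ((n:ℝ) + 1 + x*y)) * ((x+y+(n:ℝ)+1) * ((n:ℝ)+2)) := by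
          apply mul_le_mul_of_nonneg_right ih
          have : (0:ℝ) ≤ (n:ℝ) := n.cast_nonneg
          positivity
      _ ≤ ((∏ j ∈ Finset.range n, (x + j + 1)) * (∏ j ∈ Finset.range n, (y + j + 1)))
            * ((x+(n:ℝ)+1) * (y+(n:ℝ)+1) * ((n:ℝ)+1+1+x*y)) := by
          rw [mul_assoc]
          apply mul_le_mul_of_nonneg_left _ (mul_nonneg hP1 hP2)
          have hn : (0:ℝ) ≤ (n:ℝ) := n.cast_nonneg
          nlinarith [hkey, n.cast_nonneg (α := ℝ)]
      _ = (∏ j ∈ Finset.range n, (x + j + 1)) * (x+(n:ℝ)+1)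
            * ((∏ j ∈ Finset.range n, (y + j + 1)) * (y+(n:ℝ)+1)) * ((n:ℝ)+1+1+x*y) := by ring

lemma key2 (x y : ℝ) (hx0 : 0 < x) (hx1 : x ≤ 1) (hy0 : 0 < y) (hy1 : y ≤ 1) (n : ℕ)
    (hn : 1 ≤ n) :
    Real.GammaSeq x n * Real.GammaSeq y n * (x*y*(1+x*y)) ≤
    Real.GammaSeq (x+y) n * ((x+y) * (1 + x*y * (1/((n:ℝ)+1)))) := by
  have hN : (0:ℝ) < n := by exact_mod_cast hn
  have hD : ∀ s : ℝ, ∏ j ∈ Finset.range (n+1), (s + (j:ℝ)) =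
      (∏ j ∈ Finset.range n, (s + j + 1)) * s := by
    intro s
    rw [Finset.prod_range_succ']
    push_cast
    rw [add_zero]
    exact congrArg (· * s) (Finset.prod_congr rfl fun j _ => by ring)
  set P1 := ∏ j ∈ Finset.range n, (x + j + 1) with hP1def
  set P2 := ∏ j ∈ Finset.range n, (y + j + 1) with hP2def
  set P3 := ∏ j ∈ Finset.range n, (x + y + j + 1) with hP3def
  have hP1 : 0 < P1 := Finset.prod_pos fun j _ => by positivity
  have hP2 : 0 < P2 := Finset.prod_pos fun j _ => by positivity
  have hP3 : 0 < P3 := Finset.prod_pos fun j _ => by positivity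
  have hfac : (0:ℝ) < n.factorial := by exact_mod_cast n.factorial_pos
  have e1 : Real.GammaSeq x n * Real.GammaSeq y n * (x*y*(1+x*y))
      = (n:ℝ)^(x+y) * (((n.factorial:ℝ) * n.factorial * (1+x*y)) / (P1 * P2)) := by
    rw [Real.GammaSeq, Real.GammaSeq, hD x, hD y, Real.rpow_add hN]
    field_simp
    ring
  have e2 : Real.GammaSeq (x+y) n * ((x+y) * (1 + x*y * (1/((n:ℝ)+1))))
      = (n:ℝ)^(x+y) * (((n.factorial:ℝ) * ((n:ℝ)+1+x*y)) / (P3 * ((n:ℝ)+1))) := by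
    rw [Real.GammaSeq, hD (x+y)]
    have : (0:ℝ) < (n:ℝ) + 1 := by positivity
    field_simp
    ring
  rw [e1, e2]
  apply mul_le_mul_of_nonneg_left _ (Real.rpow_nonneg hN.le _)
  rw [div_le_div_iff₀ (by positivity) (by positivity)]
  have h := mul_le_mul_of_nonneg_left (key1 x y hx0 hx1 hy0 hy1 n) (Nat.cast_nonneg n.factorial)
  calc (n.factorial:ℝ) * n.factorial * (1+x*y) * (P3 * ((n:ℝ)+1))
      = (n.factorial:ℝ) * ((n.factorial:ℝ) * P3 * (((n:ℝ)+1) * (1+x*y))) := by ring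
    _ ≤ (n.factorial:ℝ) * (P1 * P2 * ((n:ℝ)+1+x*y)) := h
    _ = (n.factorial:ℝ) * ((n:ℝ)+1+x*y) * (P1 * P2) := by ring

lemma betaFn_gamma (x y : ℝ) (hx : 0 < x) (hy : 0 < y) :
    Real.Gamma x * Real.Gamma y = Real.Gamma (x+y) * betaFn x y := by
  have h := Complex.Gamma_mul_Gamma_eq_betaIntegral (s := (x:ℂ)) (t := (y:ℂ))
    (by simpa using hx) (by simpa using hy)
  have hbeta : Complex.betaIntegral (x:ℂ) (y:ℂ) = ((betaFn x y : ℝ) : ℂ) := by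
    rw [Complex.betaIntegral, betaFn, ← intervalIntegral.integral_ofReal]
    apply intervalIntegral.integral_congr
    intro t ht
    rw [Set.uIcc_of_le (by norm_num : (0:ℝ) ≤ 1)] at ht
    push_cast
    rw [Complex.ofReal_cpow ht.1, Complex.ofReal_cpow (by linarith [ht.2] : (0:ℝ) ≤ 1 - t)]
    push_cast
    ring
  rw [hbeta, ← Complex.ofReal_add, Complex.Gamma_ofReal, Complex.Gamma_ofReal,
    Complex.Gamma_ofReal, ← Complex.ofReal_mul, ← Complex.ofReal_mul] at h
  exact_mod_cast h

lemma betaFn_integrable (x y : ℝ) (hx : 0 < x) (hy : 0 < y) :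
    IntervalIntegrable (fun t : ℝ => t ^ (x-1) * (1-t) ^ (y-1)) volume 0 1 := by
  have hc := Complex.betaIntegral_convergent (u := (x:ℂ)) (v := (y:ℂ))
    (by simpa using hx) (by simpa using hy)
  rw [intervalIntegrable_iff_integrableOn_Ioc_of_le (by norm_num)] at hc ⊢
  have hre := hc.re
  apply hre.congr
  rw [Filter.eventuallyEq_iff_exists_mem]
  refine ⟨Set.Ioc 0 1, (ae_restrict_iff' measurableSet_Ioc).mpr (ae_of_all _ fun t ht => ht), ?_⟩
  intro t ht
  have h0 : (0:ℝ) ≤ t := ht.1.le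
  have h1 : (0:ℝ) ≤ 1 - t := by linarith [ht.2]
  simp only
  rw [show ((x:ℂ) - 1) = ((x - 1 : ℝ) : ℂ) by push_cast; ring,
    show ((y:ℂ) - 1) = ((y - 1 : ℝ) : ℂ) by push_cast; ring,
    show (1 - (t:ℂ)) = ((1 - t : ℝ) : ℂ) by push_cast; ring,
    ← Complex.ofReal_cpow h0, ← Complex.ofReal_cpow h1, ← Complex.ofReal_mul]
  simp

theorem beta_bounds_reversed (x y : ℝ) (hx0 : 0 < x) (hx1 : x ≤ 1)
    (hy0 : 0 < y) (hy1 : y ≤ 1) :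
    1 / x + 1 / y - 1 ≤ betaFn x y ∧
    betaFn x y ≤ 1 / (x * y) * ((x + y) / (1 + x * y)) := by
  constructor
  · -- lower bound
    have hI1 : IntervalIntegrable (fun t : ℝ => t ^ (x-1)) volume 0 1 :=
      intervalIntegrable_rpow' (by linarith)
    have hI2 : IntervalIntegrable (fun t : ℝ => (1-t) ^ (y-1)) volume 0 1 := by
      have h := (intervalIntegrable_rpow' (a := 0) (b := 1) (r := y-1)
        (by linarith)).comp_sub_left 1
      norm_num at h
      exact h.symm
    have hIf := betaFn_integrable x y hx0 hy0
    have hle := intervalIntegral.integral_mono_on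
      (f := fun t : ℝ => t ^ (x-1) + ((1-t) ^ (y-1) - 1))
      (g := fun t : ℝ => t ^ (x-1) * (1-t) ^ (y-1)) (by norm_num : (0:ℝ) ≤ 1)
      (hI1.add (hI2.sub (_root_.intervalIntegrable_const (c := (1:ℝ))))) hIf ?_
    · have h1 : (∫ t in (0:ℝ)..1, t ^ (x-1)) = 1/x := by
        rw [integral_rpow (Or.inl (by linarith)), sub_add_cancel, Real.one_rpow,
          Real.zero_rpow hx0.ne']
        ring
      have h2 : (∫ t in (0:ℝ)..1, (1-t) ^ (y-1)) = 1/y := by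
        rw [show (fun t : ℝ => (1-t) ^ (y-1)) = (fun t : ℝ => ((fun s : ℝ => s ^ (y-1)) (1 - t)))
          from rfl]
        rw [intervalIntegral.integral_comp_sub_left (fun s : ℝ => s ^ (y-1)) 1]
        norm_num
        rw [integral_rpow (Or.inl (by linarith)), sub_add_cancel, Real.one_rpow,
          Real.zero_rpow hy0.ne']
        ring
      rw [intervalIntegral.integral_add hI1 (hI2.sub intervalIntegrable_const),
        intervalIntegral.integral_sub hI2 (_root_.intervalIntegrable_const (c := (1:ℝ))), h1, h2,
        intervalIntegral.integral_const] at hle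
      simp only [smul_eq_mul, mul_one, sub_zero] at hle
      have hb : betaFn x y = ∫ u in (0:ℝ)..1, u ^ (x-1) * (1-u) ^ (y-1) := rfl
      rw [hb]
      linarith [hle]
    · intro t ht
      rcases eq_or_lt_of_le ht.1 with h0 | h0
      · rw [← h0]; norm_num [Real.one_rpow]
      rcases eq_or_lt_of_le ht.2 with h1 | h1
      · rw [h1]; norm_num [Real.one_rpow]
      · have ha : 1 ≤ t ^ (x-1) :=
          Real.one_le_rpow_of_pos_of_le_one_of_nonpos h0 (le_of_lt h1) (by linarith)
        have hb : 1 ≤ (1-t) ^ (y-1) :=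
          Real.one_le_rpow_of_pos_of_le_one_of_nonpos (by linarith) (by linarith) (by linarith)
        nlinarith [mul_nonneg (sub_nonneg.2 ha) (sub_nonneg.2 hb)]
  · -- upper bound
    have hGpos : 0 < Real.Gamma (x+y) := Real.Gamma_pos_of_pos (by linarith)
    have hbg := betaFn_gamma x y hx0 hy0
    have hT1 : Filter.Tendsto (fun n => Real.GammaSeq x n * Real.GammaSeq y n * (x*y*(1+x*y)))
        Filter.atTop (nhds (Real.Gamma x * Real.Gamma y * (x*y*(1+x*y)))) :=
      ((Real.GammaSeq_tendsto_Gamma x).mul (Real.GammaSeq_tendsto_Gamma y)).mul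
        tendsto_const_nhds
    have hT2 : Filter.Tendsto
        (fun n : ℕ => Real.GammaSeq (x+y) n * ((x+y) * (1 + x*y * (1/((n:ℝ)+1)))))
        Filter.atTop (nhds (Real.Gamma (x+y) * (x+y))) := by
      have := (Real.GammaSeq_tendsto_Gamma (x+y)).mul
        ((tendsto_const_nhds (x := (x+y))).mul
          ((tendsto_const_nhds (x := (1:ℝ))).add
            ((tendsto_const_nhds (x := x*y)).mul tendsto_one_div_add_atTop_nhds_zero_nat)))
      simpa using this
    have hmain : Real.Gamma x * Real.Gamma y * (x*y*(1+x*y)) ≤ Real.Gamma (x+y) * (x+y) :=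
      le_of_tendsto_of_tendsto hT1 hT2
        (Filter.eventually_atTop.2 ⟨1, fun n hn => key2 x y hx0 hx1 hy0 hy1 n hn⟩)
    have h4 : Real.Gamma (x+y) * (betaFn x y * (x*y*(1+x*y))) ≤ Real.Gamma (x+y) * (x+y) := by
      calc Real.Gamma (x+y) * (betaFn x y * (x*y*(1+x*y)))
          = Real.Gamma x * Real.Gamma y * (x*y*(1+x*y)) := by rw [hbg]; ring
        _ ≤ Real.Gamma (x+y) * (x+y) := hmain
    have h3 : betaFn x y * (x*y*(1+x*y)) ≤ x + y := le_of_mul_le_mul_left h4 hGpos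
    have heq : 1/(x*y) * ((x+y)/(1+x*y)) = (x+y)/(x*y*(1+x*y)) := by
      rw [div_mul_div_comm, one_mul]
    rw [heq, le_div_iff₀ (by positivity)]
    exact h3
end
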